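/- Let (a₁, a₂, a₃) be a Markov triple with a₁ > 1. Then a₂ is invertible modulo a₁, and in ℤ/a₁ℤ one has ((a₂² + a₃²)/a₁) · (a₂²)⁻¹ = 3 · a₂⁻¹ · a₃, where (a₂² + a₃²)/a₁ denotes the integer quotient (which exists since a₁ divides a₂² + a₃²). -/

import Mathlib

/-- Core descent: no positive sorted solutions to `x²+y²+z² = k·xyz` when `k ≥ 6`. -/
lemma markov_no_sol_aux (k : ℕ) (hk : 6 ≤ k) :
    ∀ n x y z : ℕ, 0 < x → 0 < y → 0 < z → x ≤ y → y ≤ z → x + y + z ≤ n →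
      x ^ 2 + y ^ 2 + z ^ 2 = k * (x * y * z) → False := by
  intro n
  induction n with
  | zero => intro x y z hx hy hz _ _ hs _; omega
  | succ n ih =>
    intro x y z hx hy hz hxy hyz hs heq
    rcases le_or_gt (z ^ 2) (x ^ 2 + y ^ 2) with hcase | hcase
    · -- no descent possible: contradiction
      nlinarith [sq_nonneg (x - 1), mul_pos hx hy, mul_pos (mul_pos hx hy) hz,
        Nat.mul_le_mul hxy hyz]
    · -- descent
      have hzle : z ≤ k * (x * y) := by
        have : z * z ≤ k * (x * y) * z := by nlinarith
        exact Nat.le_of_mul_le_mul_right this hz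
      set z' := k * (x * y) - z with hz'
      have hsum : z' + z = k * (x * y) := by omega
      have hmul : z' * z = x ^ 2 + y ^ 2 := by nlinarith
      have hz'pos : 0 < z' := by
        rcases Nat.eq_zero_or_pos z' with h0 | h0
        · rw [h0] at hmul; nlinarith
        · exact h0
      have hz'lt : z' < z := by
        have hlt : z' * z < z * z := by rw [hmul]; nlinarith
        exact Nat.lt_of_mul_lt_mul_right hlt
      have heq' : x ^ 2 + y ^ 2 + z' ^ 2 = k * (x * y * z') := by
        have hk' : k * (x * y * z') = z' * z + z' * z' := by
          rw [show k * (x * y * z') = k * (x * y) * z' by ring, ← hsum]; ring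
        rw [hk', hmul]; ring
      -- sort x, y, z'
      rcases le_total z' x with h1 | h1
      · exact ih z' x y hz'pos hx hy h1 hxy (by omega)
          (by linear_combination heq')
      · rcases le_total z' y with h2 | h2
        · exact ih x z' y hx hz'pos hy h1 h2 (by omega)
            (by linear_combination heq')
        · exact ih x y z' hx hy hz'pos hxy h2 (by omega)
            (by linear_combination heq')

/-- No positive solutions to `x²+y²+z² = k·xyz` when `k ≥ 6`. -/
lemma markov_no_sol (k : ℕ) (hk : 6 ≤ k) (x y z : ℕ) (hx : 0 < x) (hy : 0 < y)
    (hz : 0 < z) (heq : x ^ 2 + y ^ 2 + z ^ 2 = k * (x * y * z)) : False := by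
  rcases le_total x y with h1 | h1
  · rcases le_total y z with h2 | h2
    · exact markov_no_sol_aux k hk (x + y + z) x y z hx hy hz h1 h2 le_rfl heq
    · rcases le_total x z with h3 | h3
      · exact markov_no_sol_aux k hk (x + y + z) x z y hx hz hy h3 h2 (by omega)
          (by linear_combination heq)
      · exact markov_no_sol_aux k hk (x + y + z) z x y hz hx hy h3 h1 (by omega)
          (by linear_combination heq)
  · rcases le_total x z with h2 | h2
    · exact markov_no_sol_aux k hk (x + y + z) y x z hy hx hz h1 h2 (by omega)
        (by linear_combination heq)
    · rcases le_total y z with h3 | h3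
      · exact markov_no_sol_aux k hk (x + y + z) y z x hy hz hx h3 h2 (by omega)
          (by linear_combination heq)
      · exact markov_no_sol_aux k hk (x + y + z) z y x hz hy hx h3 h1 (by omega)
          (by linear_combination heq)

/-- Let `(a₁, a₂, a₃)` be a Markov triple with `a₁ > 1`. Then `a₂` is
invertible modulo `a₁`, and in `ℤ/a₁ℤ` one has
`((a₂² + a₃²)/a₁) · (a₂²)⁻¹ = 3 · a₂⁻¹ · a₃`, where `(a₂² + a₃²)/a₁` denotes
the integer quotient. -/
theorem markov_wahl_parameter (a₁ a₂ a₃ : ℕ) (h₁ : 0 < a₁) (h₂ : 0 < a₂) (h₃ : 0 < a₃)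
    (h : a₁ ^ 2 + a₂ ^ 2 + a₃ ^ 2 = 3 * a₁ * a₂ * a₃) (h₁' : 1 < a₁) :
    IsUnit (a₂ : ZMod a₁) ∧
    (((a₂ ^ 2 + a₃ ^ 2) / a₁ : ℕ) : ZMod a₁) * ((a₂ : ZMod a₁) ^ 2)⁻¹ =
      3 * (a₂ : ZMod a₁)⁻¹ * (a₃ : ZMod a₁) := by
  haveI : NeZero a₁ := ⟨h₁.ne'⟩
  -- pairwise coprimality of a₁ and a₂
  have hcop : Nat.Coprime a₂ a₁ := by
    by_contra hg
    set g := Nat.gcd a₂ a₁ with hgdef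
    have hgpos : 0 < g := Nat.gcd_pos_of_pos_right _ h₁
    have hg1 : 1 < g := by
      rw [Nat.Coprime] at hg; omega
    have hd2 : g ∣ a₂ := Nat.gcd_dvd_left _ _
    have hd1 : g ∣ a₁ := Nat.gcd_dvd_right _ _
    have hd3 : g ∣ a₃ := by
      have hsq : g ^ 2 ∣ a₃ ^ 2 := by
        have hh1 : g ^ 2 ∣ a₁ ^ 2 := pow_dvd_pow_of_dvd hd1 2
        have hh2 : g ^ 2 ∣ a₂ ^ 2 := pow_dvd_pow_of_dvd hd2 2
        have hh3 : g ^ 2 ∣ 3 * a₁ * a₂ * a₃ := by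
          obtain ⟨c, hc⟩ := hd1; obtain ⟨d, hd⟩ := hd2
          exact ⟨3 * c * d * a₃, by rw [hc, hd]; ring⟩
        have hall : g ^ 2 ∣ a₁ ^ 2 + a₂ ^ 2 + a₃ ^ 2 := h ▸ hh3
        have h4 := Nat.dvd_sub (Nat.dvd_sub hall hh1) hh2
        have h5 : a₁ ^ 2 + a₂ ^ 2 + a₃ ^ 2 - a₁ ^ 2 - a₂ ^ 2 = a₃ ^ 2 := by omega
        rwa [h5] at h4
      exact (Nat.pow_dvd_pow_iff two_ne_zero).mp hsq
    obtain ⟨b₁, hb₁⟩ := hd1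
    obtain ⟨b₂, hb₂⟩ := hd2
    obtain ⟨b₃, hb₃⟩ := hd3
    have hb₁p : 0 < b₁ := Nat.pos_of_ne_zero (by rintro rfl; simp at hb₁; omega)
    have hb₂p : 0 < b₂ := Nat.pos_of_ne_zero (by rintro rfl; simp at hb₂; omega)
    have hb₃p : 0 < b₃ := Nat.pos_of_ne_zero (by rintro rfl; simp at hb₃; omega)
    have hred : b₁ ^ 2 + b₂ ^ 2 + b₃ ^ 2 = (3 * g) * (b₁ * b₂ * b₃) := by
      have hbig : g ^ 2 * (b₁ ^ 2 + b₂ ^ 2 + b₃ ^ 2) =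
          g ^ 2 * ((3 * g) * (b₁ * b₂ * b₃)) := by
        rw [hb₁, hb₂, hb₃] at h; linear_combination h
      exact Nat.eq_of_mul_eq_mul_left (by positivity) hbig
    exact markov_no_sol (3 * g) (by omega) b₁ b₂ b₃ hb₁p hb₂p hb₃p hred
  have hu : IsUnit (a₂ : ZMod a₁) := (ZMod.isUnit_iff_coprime a₂ a₁).mpr hcop
  refine ⟨hu, ?_⟩
  -- compute the quotient explicitly
  have h3le : a₁ ≤ 3 * a₂ * a₃ := by nlinarith
  have hqeq : a₂ ^ 2 + a₃ ^ 2 = a₁ * (3 * a₂ * a₃ - a₁) := by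
    zify [h3le]; linarith [h]
  have hq : (a₂ ^ 2 + a₃ ^ 2) / a₁ = 3 * a₂ * a₃ - a₁ := by
    rw [hqeq, Nat.mul_div_cancel_left _ h₁]
  rw [hq, Nat.cast_sub h3le]
  push_cast
  rw [ZMod.natCast_self]
  set x : ZMod a₁ := (a₂ : ZMod a₁)
  have hx1 : x * x⁻¹ = 1 := ZMod.mul_inv_of_unit x hu
  have hinv : (x ^ 2)⁻¹ = x⁻¹ * x⁻¹ := by
    have : x ^ 2 * (x⁻¹ * x⁻¹) = 1 := by
      rw [pow_two]
      calc x * x * (x⁻¹ * x⁻¹) = (x * x⁻¹) * (x * x⁻¹) := by ring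
        _ = 1 := by rw [hx1]; ring
    exact ZMod.inv_eq_of_mul_eq_one a₁ _ _ this
  rw [hinv, sub_zero]
  calc 3 * (a₂ : ZMod a₁) * (a₃ : ZMod a₁) * (x⁻¹ * x⁻¹)
      = 3 * x⁻¹ * (a₃ : ZMod a₁) * (x * x⁻¹) := by ring
    _ = 3 * x⁻¹ * (a₃ : ZMod a₁) := by rw [hx1, mul_one]
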